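/- If F is a family of r-element subsets of {1,...,n} such that any k of its members (k ≥ 2) have a common element, and r ≤ (k-1)n/k, then |F| ≤ C(n-1, r-1). -/

import Mathlib

open Finset
open Fin.NatCast

section Arc
variable {n : ℕ} [NeZero n]

/-- The cyclic arc of length `r` starting at `t` in `Fin n`. -/
def arcset (r : ℕ) (t : Fin n) : Finset (Fin n) :=
  (Finset.range r).image (fun d : ℕ => t + (d : Fin n))

lemma mem_arcset {r : ℕ} (hr : r ≤ n) (t x : Fin n) :
    x ∈ arcset r t ↔ (x - t).val < r := by
  unfold arcset
  simp only [Finset.mem_image, Finset.mem_range]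
  constructor
  · rintro ⟨d, hd, rfl⟩
    have : t + (d : Fin n) - t = (d : Fin n) := by abel
    rw [this, Fin.val_natCast, Nat.mod_eq_of_lt (lt_of_lt_of_le hd hr)]
    exact hd
  · intro h
    refine ⟨(x - t).val, h, ?_⟩
    rw [Fin.cast_val_eq_self]
    abel

lemma card_arcset {r : ℕ} (hr : r ≤ n) (t : Fin n) : (arcset r t).card = r := by
  unfold arcset
  rw [Finset.card_image_of_injOn, Finset.card_range]
  intro d₁ h₁ d₂ h₂ h
  simp only [Finset.coe_range, Set.mem_Iio] at h₁ h₂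
  have := add_left_cancel h
  have h1 := congrArg Fin.val this
  rwa [Fin.val_natCast, Fin.val_natCast, Nat.mod_eq_of_lt (lt_of_lt_of_le h₁ hr),
    Nat.mod_eq_of_lt (lt_of_lt_of_le h₂ hr)] at h1

lemma sub_val_add (x s : Fin n) (u : ℕ) (hu : u < n) :
    (x - (s + (u : Fin n))).val = (n - u + (x - s).val) % n := by
  have h : x - (s + (u : Fin n)) = (x - s) - (u : Fin n) := by abel
  rw [h, Fin.sub_def]
  simp [Fin.val_natCast, Nat.mod_eq_of_lt hu]


lemma arc_lemma {n r k : ℕ} [NeZero n] (hr1 : 1 ≤ r) (hrn : r < n) (hk : 1 ≤ k)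
    (hkr : k * r ≤ (k - 1) * n) (S : Finset (Fin n))
    (hS : ∀ a : Fin k → Fin n, (∀ i, a i ∈ S) → ∃ x : Fin n, ∀ i, (x - a i).val < r) :
    S.card ≤ r := by
  by_contra hc
  push_neg at hc
  set l := n - r with hl
  have hl1 : 1 ≤ l := by omega
  have hln : l < n := by omega
  -- n ≤ k * l
  have hkn : k * n = k * r + k * l := by rw [← Nat.mul_add]; congr 1; omega
  have hk1n : (k - 1) * n + n = k * n := by
    rw [← Nat.add_one_mul]; congr 1; omega
  have hnkl : n ≤ k * l := by omega
  set K := (n + l - 1) / l with hK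
  have h1 : K * l ≤ n + l - 1 := Nat.div_mul_le_self _ _
  have h2 : n + l - 1 < K * l + l := by
    have := (Nat.div_lt_iff_lt_mul (show 0 < l by omega)).mp
      (Nat.lt_succ_self ((n + l - 1) / l))
    rw [Nat.add_one_mul, ← hK] at this
    omega
  have hnK : n ≤ K * l := by omega
  have hm : K * l - n < l := by omega
  set m := K * l - n with hmdef
  have hKk : K ≤ k := by
    have hlt : (n + l - 1) / l < k + 1 := by
      rw [Nat.div_lt_iff_lt_mul (show 0 < l by omega), Nat.add_one_mul]
      omega
    omega
  have hK1 : 1 ≤ K := by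
    rw [hK, Nat.le_div_iff_mul_le (show 0 < l by omega)]
    omega
  have hK1l : (K - 1) * l + l = K * l := by rw [← Nat.add_one_mul]; congr 1; omega
  -- complement
  have hMcard : Sᶜ.card ≤ l - 1 := by
    have := Finset.card_compl (s := S)
    rw [Fintype.card_fin] at this
    omega
  obtain ⟨s₀, hs₀⟩ := Finset.card_pos.mp (show 0 < S.card by omega)
  set ban : Fin n → ℕ := fun p => ((p - s₀).val + m) % l with hban
  -- good residue
  have hgood : ∃ a, a ∈ Finset.range l ∧ a ∉ Sᶜ.image ban := by
    by_contra hcon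
    push_neg at hcon
    have hsub : Finset.range l ⊆ Sᶜ.image ban := fun a ha => hcon a ha
    have h7 := Finset.card_le_card hsub
    have h8 := Finset.card_image_le (s := Sᶜ) (f := ban)
    rw [Finset.card_range] at h7
    omega
  obtain ⟨a, haR, haN⟩ := hgood
  have ha : a < l := Finset.mem_range.mp haR
  set u : ℕ → ℕ := fun j => a + j * l - m with hu
  -- u j bounds
  have hub : ∀ j, j < K → u j ≤ n - 1 := by
    intro j hj
    have hjl : j * l ≤ (K - 1) * l := Nat.mul_le_mul_right l (by omega)
    have : u j = a + j * l - m := rfl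
    omega
  set t : ℕ → Fin n := fun j => s₀ + ((u j : ℕ) : Fin n) with ht
  have htsub : ∀ j, (t j - s₀).val = u j % n := by
    intro j
    have : t j - s₀ = ((u j : ℕ) : Fin n) := by rw [ht]; exact add_sub_cancel_left s₀ _
    rw [this, Fin.val_natCast]
  have htS : ∀ j, j < K → t j ∈ S := by
    intro j hj
    by_cases h0 : u j = 0
    · have : t j = s₀ := by
        rw [ht]; simp [h0]
      rw [this]; exact hs₀
    · by_contra hnot
      have hmem : t j ∈ Sᶜ := Finset.mem_compl.mpr hnot
      have hbant : ban (t j) ∈ Sᶜ.image ban := Finset.mem_image_of_mem _ hmem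
      have hujn : u j < n := by have := hub j hj; omega
      have h3 : ban (t j) = (u j + m) % l := by
        rw [hban]; simp only []
        rw [htsub j, Nat.mod_eq_of_lt hujn]
      have h4 : u j + m = a + j * l := by
        have : u j = a + j * l - m := rfl
        have hge : m + 1 ≤ a + j * l := by
          rcases Nat.eq_zero_or_pos j with hj0 | hj0
          · subst hj0; simp only [Nat.zero_mul, Nat.add_zero] at this ⊢; omega
          · have : l ≤ j * l := Nat.le_mul_of_pos_left l hj0
            omega
        omega
      have h5 : ban (t j) = a := by
        rw [h3, h4, Nat.add_mul_mod_self_right, Nat.mod_eq_of_lt ha]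
      rw [h5] at hbant
      exact haN hbant
  -- the tuple
  set aa : Fin k → Fin n := fun i => t (if i.val < K then i.val else 0) with haa
  have haaS : ∀ i, aa i ∈ S := by
    intro i
    show t (if i.val < K then i.val else 0) ∈ S
    by_cases hi : i.val < K
    · rw [if_pos hi]; exact htS _ hi
    · rw [if_neg hi]; exact htS _ (by omega)
  obtain ⟨x, hx⟩ := hS aa haaS
  set y := (x - s₀).val with hy
  have hyn : y < n := (x - s₀).is_lt
  have hsubval : ∀ j, j < K → (x - t j).val = (n - u j + y) % n := by
    intro j hj
    rw [ht]
    exact sub_val_add x s₀ (u j) (by have := hub j hj; omega)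
  have huK1 : u (K - 1) = a + n - l := by
    have : u (K - 1) = a + (K - 1) * l - m := rfl
    omega
  by_cases hcase : n - l + a ≤ y
  · -- use j = 0
    have h0k : (0 : ℕ) < k := by omega
    have hxi := hx ⟨0, h0k⟩
    have haa0 : aa ⟨0, h0k⟩ = t 0 := by
      show t (if (0:ℕ) < K then 0 else 0) = t 0
      rw [ite_self]
    rw [haa0, hsubval 0 (by omega)] at hxi
    have hu0 : u 0 ≤ a := by
      have : u 0 = a + 0 * l - m := rfl
      omega
    have heq : (n - u 0 + y) % n = y - u 0 := by
      have h6 : n - u 0 + y = n + (y - u 0) := by omega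
      rw [h6, Nat.add_mod_left, Nat.mod_eq_of_lt (by omega)]
    rw [heq] at hxi
    omega
  · -- least j with y < u j
    have hPex : ∃ j, y < u j := ⟨K - 1, by omega⟩
    set j₀ := Nat.find hPex with hj₀
    have hPj₀ : y < u j₀ := Nat.find_spec hPex
    have hj₀le : j₀ ≤ K - 1 := Nat.find_le (by omega)
    have hj₀K : j₀ < K := by omega
    have hup : u j₀ ≤ y + l := by
      rcases Nat.eq_zero_or_pos j₀ with h0 | h0
      · have : u j₀ ≤ a := by
          rw [h0]
          have : u 0 = a + 0 * l - m := rfl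
          omega
        omega
      · have hprev : ¬ y < u (j₀ - 1) := Nat.find_min hPex (by omega)
        have e1 : u (j₀ - 1) = a + (j₀ - 1) * l - m := rfl
        have e2 : u j₀ = a + j₀ * l - m := rfl
        have e3 : (j₀ - 1) * l + l = j₀ * l := by
          rw [← Nat.add_one_mul]; congr 1; omega
        omega
    have hik : j₀ < k := by omega
    have hxi := hx ⟨j₀, hik⟩
    have haaj : aa ⟨j₀, hik⟩ = t j₀ := by
      show t (if j₀ < K then j₀ else 0) = t j₀
      rw [if_pos hj₀K]
    rw [haaj, hsubval j₀ hj₀K] at hxi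
    have hujn : u j₀ ≤ n - 1 := hub j₀ hj₀K
    have heq : (n - u j₀ + y) % n = n - u j₀ + y := Nat.mod_eq_of_lt (by omega)
    rw [heq] at hxi
    omega


end Arc

section PermCount
variable {n : ℕ}

lemma card_perm_image (A B : Finset (Fin n)) (h : B.card = A.card) :
    (Finset.univ.filter fun σ : Equiv.Perm (Fin n) => B.image σ = A).card
      = Nat.factorial B.card * Nat.factorial (n - B.card) := by
  classical
  rw [← Fintype.card_subtype]
  let mk : (({x // x ∈ B} ≃ {x // x ∈ A}) × ({x // ¬ x ∈ B} ≃ {x // ¬ x ∈ A})) →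
      Equiv.Perm (Fin n) := fun p =>
    (Equiv.sumCompl (· ∈ B)).symm.trans ((p.1.sumCongr p.2).trans (Equiv.sumCompl (· ∈ A)))
  have hpos : ∀ p x (hx : x ∈ B), mk p x = (p.1 ⟨x, hx⟩ : Fin n) := by
    intro p x hx
    show (Equiv.sumCompl (· ∈ A)) (Sum.map p.1 p.2 ((Equiv.sumCompl (· ∈ B)).symm x)) = _
    rw [Equiv.sumCompl_symm_apply_of_pos hx]
    rfl
  have hneg : ∀ p x (hx : ¬ x ∈ B), mk p x = (p.2 ⟨x, hx⟩ : Fin n) := by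
    intro p x hx
    show (Equiv.sumCompl (· ∈ A)) (Sum.map p.1 p.2 ((Equiv.sumCompl (· ∈ B)).symm x)) = _
    rw [Equiv.sumCompl_symm_apply_of_neg hx]
    rfl
  let g : (({x // x ∈ B} ≃ {x // x ∈ A}) × ({x // ¬ x ∈ B} ≃ {x // ¬ x ∈ A})) →
      {σ : Equiv.Perm (Fin n) // B.image σ = A} := fun p => by
    refine ⟨mk p, ?_⟩
    have hsub : B.image (mk p) ⊆ A := by
      intro y hy
      obtain ⟨x, hx, rfl⟩ := Finset.mem_image.mp hy
      rw [hpos p x hx]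
      exact (p.1 ⟨x, hx⟩).2
    refine Finset.eq_of_subset_of_card_le hsub ?_
    rw [Finset.card_image_of_injective _ (mk p).injective, h]
  have hbij : Function.Bijective g := by
    constructor
    · intro p q hpq
      have hσ : mk p = mk q := congrArg Subtype.val hpq
      ext x
      · have h1 := hpos p x.1 x.2
        have h2 := hpos q x.1 x.2
        rw [hσ] at h1
        rw [h1] at h2
        exact congrArg Fin.val h2.symm ▸ (by rw [← h2]) -- fix below
      · have h1 := hneg p x.1 x.2
        have h2 := hneg q x.1 x.2
        rw [hσ] at h1
        rw [h1] at h2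
        exact (by rw [← h2])
    · rintro ⟨σ, hσ⟩
      have hB : ∀ x, x ∈ B → σ x ∈ A := by
        intro x hx
        rw [← hσ]; exact Finset.mem_image_of_mem _ hx
      have hB' : ∀ x, ¬ x ∈ B → ¬ σ x ∈ A := by
        intro x hx hA
        rw [← hσ] at hA
        obtain ⟨w, hw, hwx⟩ := Finset.mem_image.mp hA
        exact hx (σ.injective hwx ▸ hw)
      have hinj1 : Function.Injective (fun x : {x // x ∈ B} => (⟨σ x, hB _ x.2⟩ : {x // x ∈ A})) := by
        intro x y hxy
        exact Subtype.ext (σ.injective (congrArg Subtype.val hxy))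
      have hsurj1 : Function.Surjective (fun x : {x // x ∈ B} => (⟨σ x, hB _ x.2⟩ : {x // x ∈ A})) := by
        rintro ⟨y, hy⟩
        rw [← hσ] at hy
        obtain ⟨w, hw, hwy⟩ := Finset.mem_image.mp hy
        exact ⟨⟨w, hw⟩, Subtype.ext hwy⟩
      have hinj2 : Function.Injective (fun x : {x // ¬ x ∈ B} => (⟨σ x, hB' _ x.2⟩ : {x // ¬ x ∈ A})) := by
        intro x y hxy
        exact Subtype.ext (σ.injective (congrArg Subtype.val hxy))
      have hsurj2 : Function.Surjective (fun x : {x // ¬ x ∈ B} => (⟨σ x, hB' _ x.2⟩ : {x // ¬ x ∈ A})) := by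
        rintro ⟨y, hy⟩
        refine ⟨⟨σ.symm y, fun hc => hy ?_⟩, Subtype.ext (σ.apply_symm_apply y)⟩
        have := hB _ hc
        rwa [σ.apply_symm_apply] at this
      refine ⟨⟨Equiv.ofBijective _ ⟨hinj1, hsurj1⟩, Equiv.ofBijective _ ⟨hinj2, hsurj2⟩⟩, ?_⟩
      apply Subtype.ext
      apply Equiv.ext
      intro x
      by_cases hx : x ∈ B
      · rw [hpos _ x hx]; rfl
      · rw [hneg _ x hx]; rfl
  rw [← Fintype.card_of_bijective hbij, Fintype.card_prod,
    Fintype.card_equiv (Fintype.equivOfCardEq (by rw [Fintype.card_coe, Fintype.card_coe, h])),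
    Fintype.card_equiv (Fintype.equivOfCardEq (by
      rw [Fintype.card_subtype_compl, Fintype.card_subtype_compl,
        Fintype.card_coe, Fintype.card_coe, h])),
    Fintype.card_coe, Fintype.card_subtype_compl, Fintype.card_coe, Fintype.card_fin]

end PermCount


/-- Frankl's theorem: a `k`-wise intersecting family of `r`-subsets of `[n]`
with `r ≤ (k-1)n/k` has size at most `C(n-1, r-1)`. -/
theorem frankl_kwise_intersecting (n r k : ℕ) (hk : 2 ≤ k)
    (F : Finset (Finset (Fin n)))
    (hcard : ∀ A ∈ F, A.card = r)
    (hkw : ∀ f : Fin k → Finset (Fin n), (∀ i, f i ∈ F) → ∃ v, ∀ i, v ∈ f i)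
    (hr : k * r ≤ (k - 1) * n) :
    F.card ≤ (n - 1).choose (r - 1) := by
  classical
  rcases F.eq_empty_or_nonempty with hF | ⟨A₀, hA₀⟩
  · simp [hF]
  have hA₀r : A₀.card = r := hcard A₀ hA₀
  rcases Nat.eq_zero_or_pos r with hr0 | hr1
  · exfalso
    obtain ⟨v, hv⟩ := hkw (fun _ => A₀) (fun _ => hA₀)
    have := hv ⟨0, by omega⟩
    rw [Finset.card_eq_zero.mp (hA₀r.trans hr0)] at this
    exact absurd this (Finset.notMem_empty v)
  have hrn : r ≤ n := by
    have h := Finset.card_le_univ A₀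
    simp only [Finset.card_univ, Fintype.card_fin] at h
    omega
  have hrltn : r < n := by
    rcases Nat.lt_or_ge r n with h | h
    · exact h
    · exfalso
      have hrn' : r = n := by omega
      have h1 : (k - 1) * n + n = k * n := by
        rw [← Nat.add_one_mul]; congr 1; omega
      rw [hrn'] at hr
      omega
  have hn : 1 ≤ n := by omega
  haveI : NeZero n := ⟨by omega⟩
  -- the double count
  set c : ℕ := ∑ σ : Equiv.Perm (Fin n),
      (Finset.univ.filter fun a : Fin n => (arcset r a).image σ ∈ F).card with hc
  have hupper : c ≤ (Nat.factorial n) * r := by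
    have hbound : ∀ σ : Equiv.Perm (Fin n),
        (Finset.univ.filter fun a : Fin n => (arcset r a).image σ ∈ F).card ≤ r := by
      intro σ
      apply arc_lemma hr1 hrltn (by omega) hr
      intro a ha
      obtain ⟨v, hv⟩ := hkw (fun i => (arcset r (a i)).image σ) (fun i => by
        have := ha i
        simpa using this)
      refine ⟨σ.symm v, fun i => ?_⟩
      have hvi := hv i
      obtain ⟨w, hw, hwv⟩ := Finset.mem_image.mp hvi
      have : σ.symm v = w := by rw [← hwv, Equiv.symm_apply_apply]
      rw [this] at *
      exact (mem_arcset hrn _ _).mp hw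
    calc c ≤ ∑ _σ : Equiv.Perm (Fin n), r := Finset.sum_le_sum (fun σ _ => hbound σ)
    _ = (Nat.factorial n) * r := by
        rw [Finset.sum_const, smul_eq_mul]
        congr 1
        rw [← Fintype.card_fin n, ← Fintype.card_perm]
        simp
  have hlower : c = n * (F.card * (Nat.factorial r * Nat.factorial (n - r))) := by
    have hswap : c = ∑ a : Fin n,
        (Finset.univ.filter fun σ : Equiv.Perm (Fin n) => (arcset r a).image σ ∈ F).card := by
      rw [hc]
      simp only [Finset.card_filter]
      rw [Finset.sum_comm]
    rw [hswap]
    have hinner : ∀ a : Fin n,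
        (Finset.univ.filter fun σ : Equiv.Perm (Fin n) => (arcset r a).image σ ∈ F).card
          = F.card * (Nat.factorial r * Nat.factorial (n - r)) := by
      intro a
      have hperA : ∀ A ∈ F,
          ((Finset.univ.filter fun σ : Equiv.Perm (Fin n) => (arcset r a).image σ ∈ F).filter
            (fun σ : Equiv.Perm (Fin n) => (arcset r a).image σ = A)).card
          = Nat.factorial r * Nat.factorial (n - r) := by
        intro A hA
        have hEq : ((Finset.univ.filter fun σ : Equiv.Perm (Fin n) =>
              (arcset r a).image σ ∈ F).filter
              (fun σ : Equiv.Perm (Fin n) => (arcset r a).image σ = A))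
            = Finset.univ.filter (fun σ : Equiv.Perm (Fin n) => (arcset r a).image σ = A) := by
          ext σ
          simp only [Finset.mem_filter, Finset.mem_univ, true_and]
          exact ⟨fun h => h.2, fun h => ⟨by rw [h]; exact hA, h⟩⟩
        rw [hEq, card_perm_image A (arcset r a) (by rw [card_arcset hrn, hcard A hA]),
          card_arcset hrn]
      calc (Finset.univ.filter fun σ : Equiv.Perm (Fin n) => (arcset r a).image σ ∈ F).card
          = ∑ A ∈ F, ((Finset.univ.filter fun σ : Equiv.Perm (Fin n) =>
              (arcset r a).image σ ∈ F).filter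
              (fun σ : Equiv.Perm (Fin n) => (arcset r a).image σ = A)).card :=
            Finset.card_eq_sum_card_fiberwise (fun σ hσ => (Finset.mem_filter.mp hσ).2)
        _ = ∑ _A ∈ F, Nat.factorial r * Nat.factorial (n - r) := Finset.sum_congr rfl hperA
        _ = F.card * (Nat.factorial r * Nat.factorial (n - r)) := by
            rw [Finset.sum_const, smul_eq_mul]
    rw [Finset.sum_congr rfl (fun a _ => hinner a), Finset.sum_const, smul_eq_mul]
    simp
  -- conclude
  obtain ⟨n', rfl⟩ : ∃ n', n = n' + 1 := ⟨n - 1, by omega⟩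
  obtain ⟨r', rfl⟩ : ∃ r', r = r' + 1 := ⟨r - 1, by omega⟩
  simp only [Nat.add_sub_cancel]
  have hkey : (n').choose r' * Nat.factorial r' * Nat.factorial (n' - r') = Nat.factorial n' :=
    Nat.choose_mul_factorial_mul_factorial (by omega)
  have hsub : n' + 1 - (r' + 1) = n' - r' := by omega
  rw [hlower, hsub] at hupper
  have hD : (n' + 1) * (F.card * (Nat.factorial (r' + 1) * Nat.factorial (n' - r')))
      = F.card * ((n' + 1) * ((r' + 1) * (Nat.factorial r' * Nat.factorial (n' - r')))) := by
    rw [Nat.factorial_succ]; ring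
  have hR : Nat.factorial (n' + 1) * (r' + 1)
      = n'.choose r' * ((n' + 1) * ((r' + 1) * (Nat.factorial r' * Nat.factorial (n' - r')))) := by
    rw [Nat.factorial_succ, ← hkey]; ring
  rw [hD, hR] at hupper
  have hpos : 0 < (n' + 1) * ((r' + 1) * (Nat.factorial r' * Nat.factorial (n' - r'))) := by
    positivity
  exact Nat.le_of_mul_le_mul_right hupper hpos
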